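/- arXiv:1307.1640 — 5 statements merged into one kernel-verified Lean document; each statement's English description precedes it below -/
import Mathlib

section
/- Let α be a Weil q^w-number (q a prime power, w an integer). Then the number field ℚ(α) is either totally real or a CM field. -/
open IntermediateField

/-- A field is totally real if every complex embedding has real image. -/
def IsTotallyRealField (K : Type*) [Field K] : Prop :=
  ∀ ι : K →+* ℂ, ∀ x : K, (ι x).im = 0

/-- A field is CM if it is totally imaginary (no real embedding) and admits an
automorphism which coincides with complex conjugation under every complex embedding. -/
def IsCMField (K : Type*) [Field K] : Prop :=
  (∀ ι : K →+* ℂ, ∃ x : K, (ι x).im ≠ 0) ∧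
    ∃ c : K ≃+* K, ∀ ι : K →+* ℂ, ∀ x : K, (starRingEnd ℂ) (ι x) = ι (c x)

/-- Let `α` be a Weil `q^w`-number (`q = p^k` a prime power, `w` an
integer).  Then the number field `ℚ(α)` is either totally real or a CM field. -/
theorem weil_number_field_totallyReal_or_CM
    (α : ℂ) (hα : IsAlgebraic ℚ α) (hα0 : α ≠ 0)
    (p k : ℕ) (hp : p.Prime) (hk : 0 < k) (q : ℝ) (hq : q = (p : ℝ) ^ k) (w : ℤ)
    (hweil : ∀ ι : ℚ⟮α⟯ →+* ℂ,
      (‖ι ⟨α, IntermediateField.mem_adjoin_simple_self ℚ α⟩‖) ^ 2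
        = q ^ w) :
    IsTotallyRealField ℚ⟮α⟯ ∨ IsCMField ℚ⟮α⟯ := by
  have hint : IsIntegral ℚ α := hα.isIntegral
  set a : ℚ⟮α⟯ := ⟨α, IntermediateField.mem_adjoin_simple_self ℚ α⟩ with ha
  have ha0 : a ≠ 0 := by
    intro h
    exact hα0 (by simpa [ha] using congrArg Subtype.val h)
  set r : ℚ := (p : ℚ) ^ k with hr
  have hrw : ((r ^ w : ℚ) : ℂ) = ((q ^ w : ℝ) : ℂ) := by
    rw [hq, hr]; push_cast; ring
  -- the key relation for every embedding
  have key0 : ∀ ι : ℚ⟮α⟯ →+* ℂ,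
      (starRingEnd ℂ) (ι a) = ((r ^ w : ℚ) : ℂ) * (ι a)⁻¹ := by
    intro ι
    have hi0 : ι a ≠ 0 := (map_ne_zero ι).mpr ha0
    have h1 : ι a * (starRingEnd ℂ) (ι a) = ((q ^ w : ℝ) : ℂ) := by
      rw [Complex.mul_conj]
      exact_mod_cast congrArg Complex.ofReal ((Complex.sq_norm (ι a)).symm.trans (hweil ι))
    have h2 : (starRingEnd ℂ) (ι a) = ((q ^ w : ℝ) : ℂ) / ι a :=
      (eq_div_iff hi0).mpr (by linear_combination h1)
    rw [hrw, h2, div_eq_mul_inv]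
  -- conj α lies in ℚ⟮α⟯
  have hconjα : (starRingEnd ℂ) α ∈ ℚ⟮α⟯ := by
    have h := key0 (ℚ⟮α⟯.val : ℚ⟮α⟯ →+* ℂ)
    have hval : (ℚ⟮α⟯.val : ℚ⟮α⟯ →+* ℂ) a = α := rfl
    rw [hval] at h
    rw [h]
    refine mul_mem ?_ (inv_mem (IntermediateField.mem_adjoin_simple_self ℚ α))
    have := ℚ⟮α⟯.algebraMap_mem (r ^ w)
    simpa [eq_ratCast (algebraMap ℚ ℂ)] using this
  -- conjugation maps ℚ⟮α⟯ into itself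
  have hmemc : ∀ x : ℚ⟮α⟯, (starRingEnd ℂ) (x : ℂ) ∈ ℚ⟮α⟯ := by
    have hle : ℚ⟮α⟯ ≤ IntermediateField.comap
        ((starRingEnd ℂ) : ℂ →+* ℂ).toRatAlgHom ℚ⟮α⟯ := by
      rw [IntermediateField.adjoin_simple_le_iff]
      exact hconjα
    intro x
    exact hle x.2
  -- the conjugation automorphism of ℚ⟮α⟯
  let c : ℚ⟮α⟯ ≃+* ℚ⟮α⟯ :=
    { toFun := fun x => ⟨(starRingEnd ℂ) (x : ℂ), hmemc x⟩
      invFun := fun x => ⟨(starRingEnd ℂ) (x : ℂ), hmemc x⟩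
      left_inv := fun x => Subtype.ext (by simp)
      right_inv := fun x => Subtype.ext (by simp)
      map_mul' := fun x y => Subtype.ext (by push_cast; exact map_mul _ _ _)
      map_add' := fun x y => Subtype.ext (by push_cast; exact map_add _ _ _) }
  have hca : c a = ((r ^ w : ℚ) : ℚ⟮α⟯) * a⁻¹ := by
    have hval := key0 (ℚ⟮α⟯.val : ℚ⟮α⟯ →+* ℂ)
    apply Subtype.ext
    have hL : ((c a : ℚ⟮α⟯) : ℂ) = (starRingEnd ℂ) α := rfl
    rw [hL]
    push_cast
    exact_mod_cast hval
  -- key property: every embedding intertwines c with conjugation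
  have key : ∀ ι : ℚ⟮α⟯ →+* ℂ, ∀ x : ℚ⟮α⟯,
      (starRingEnd ℂ) (ι x) = ι (c x) := by
    intro ι
    let pb := IntermediateField.adjoin.powerBasis hint (x := α)
    have hhom : (((starRingEnd ℂ).comp ι).toRatAlgHom : ℚ⟮α⟯ →ₐ[ℚ] ℂ)
        = (ι.comp (c : ℚ⟮α⟯ →+* ℚ⟮α⟯)).toRatAlgHom := by
      apply pb.algHom_ext
      rw [show pb.gen = a from IntermediateField.adjoin.powerBasis_gen hint]
      show (starRingEnd ℂ) (ι a) = ι (c a)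
      rw [hca, map_mul, map_inv₀, map_ratCast]
      exact key0 ι
    intro x
    exact DFunLike.congr_fun hhom x
  by_cases hid : ∀ x : ℚ⟮α⟯, c x = x
  · left
    intro ι x
    have := key ι x
    rw [hid x] at this
    exact Complex.conj_eq_iff_im.mp this
  · right
    push_neg at hid
    obtain ⟨x0, hx0⟩ := hid
    constructor
    · intro ι
      by_contra h
      push_neg at h
      apply hx0
      apply ι.injective
      rw [← key ι x0]
      exact Complex.conj_eq_iff_im.mpr (h x0)
    · exact ⟨c, key⟩
end

section
/- Let Q(X) ∈ ℂ[X] be a monic polynomial of degree n with Q(0) ≠ 0, all of whose roots α satisfy |α|² = q^w for a fixed real q > 0 and integer w. Then the polynomial obtained by applying complex conjugation to the coefficients of Q equals X^n · Q(q^w/X) / Q(0). -/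
open Polynomial

/-- Let `Q ∈ ℂ[X]` be a monic polynomial of degree `n` with `Q(0) ≠ 0`,
all of whose roots `α` satisfy `|α|² = q^w` for a fixed real `q > 0` and integer `w`.
Then the polynomial obtained by applying complex conjugation to the coefficients of `Q`
equals `X^n · Q(q^w / X) / Q(0)`, i.e.
`conj Q = Q(0)⁻¹ • ∑_{k=0}^{n} Q_k (q^w)^k X^{n-k}`. -/
theorem conj_poly_eq_reverse_twist
    (Q : Polynomial ℂ) (n : ℕ) (hmonic : Q.Monic) (hdeg : Q.natDegree = n)
    (h0 : Q.eval 0 ≠ 0)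
    (q : ℝ) (hq : 0 < q) (w : ℤ)
    (hroots : ∀ α ∈ Q.roots, ‖α‖ ^ 2 = q ^ w) :
    Q.map (starRingEnd ℂ)
      = C (Q.eval 0)⁻¹ *
        ∑ k ∈ Finset.range (n + 1),
          C (Q.coeff k * ((q : ℂ) ^ w) ^ k) * X ^ (n - k) := by
  set c : ℂ := (q : ℂ) ^ w with hc
  have hqc : (q : ℂ) ≠ 0 := by exact_mod_cast hq.ne'
  have hcne : c ≠ 0 := zpow_ne_zero _ hqc
  have hsplit : Q.Splits := IsAlgClosed.splits Q
  have hcard : Q.roots.card = n := by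
    rw [← hdeg]; exact (splits_iff_card_roots.mp hsplit)
  have hQprod : Q = (Q.roots.map fun a => X - C a).prod :=
    hsplit.eq_prod_roots_of_monic hmonic
  have hrne : ∀ a ∈ Q.roots, a ≠ 0 := by
    intro a ha h
    exact h0 (by simpa [h] using isRoot_of_mem_roots ha)
  have hconj : ∀ a ∈ Q.roots, (starRingEnd ℂ) a = c / a := by
    intro a ha
    have h1 : (starRingEnd ℂ) a * a = c := by
      rw [mul_comm, Complex.mul_conj, ← Complex.sq_norm, hroots a ha,
        Complex.ofReal_zpow]
    rw [eq_div_iff (hrne a ha), h1]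
  have hmap : Q.map (starRingEnd ℂ)
      = (Q.roots.map fun a => X - C ((starRingEnd ℂ) a)).prod := by
    conv_lhs => rw [hQprod]
    rw [Polynomial.map_multiset_prod, Multiset.map_map]
    simp [Function.comp_def]
  apply Polynomial.eq_of_infinite_eval_eq
  refine Set.Infinite.mono ?_ ((Set.finite_singleton (0 : ℂ)).infinite_compl)
  intro z hz
  have hz0 : z ≠ 0 := hz
  simp only [Set.mem_setOf_eq]
  have hL : eval z (Q.map (starRingEnd ℂ))
      = (Q.roots.map fun a => z - c / a).prod := by
    rw [hmap, eval_multiset_prod, Multiset.map_map]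
    congr 1
    apply Multiset.map_congr rfl
    intro a ha
    simp [hconj a ha]
  have hsum : (∑ k ∈ Finset.range (n + 1), Q.coeff k * c ^ k * z ^ (n - k))
      = z ^ n * Q.eval (c / z) := by
    rw [eval_eq_sum_range' (by omega : Q.natDegree < n + 1), Finset.mul_sum]
    apply Finset.sum_congr rfl
    intro k hk
    have hk' : k ≤ n := Finset.mem_range_succ_iff.mp hk
    rw [pow_sub₀ z hz0 hk', div_pow]
    field_simp
  have hevalQ : Q.eval (c / z) = (Q.roots.map fun a => c / z - a).prod := by
    conv_lhs => rw [hQprod]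
    rw [eval_multiset_prod, Multiset.map_map]
    simp
  have hzn : z ^ n * (Q.roots.map fun a => c / z - a).prod
      = (Q.roots.map fun a => c - z * a).prod := by
    have hz' : z ^ n = (Q.roots.map fun _ => z).prod := by
      rw [Multiset.map_const', Multiset.prod_replicate, hcard]
    rw [hz', ← Multiset.prod_map_mul]
    congr 1
    apply Multiset.map_congr rfl
    intro a ha
    rw [mul_sub, mul_div_cancel₀ _ hz0]
  have h0prod : Q.eval 0 = (Q.roots.map fun a => -a).prod := by
    conv_lhs => rw [hQprod]
    rw [eval_multiset_prod, Multiset.map_map]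
    simp
  have hQ0 : Q.eval 0 * (Q.roots.map fun a => z - c / a).prod
      = (Q.roots.map fun a => c - z * a).prod := by
    rw [h0prod, ← Multiset.prod_map_mul]
    congr 1
    apply Multiset.map_congr rfl
    intro a ha
    rw [neg_mul, mul_sub, mul_div_cancel₀ _ (hrne a ha)]
    ring
  rw [hL, eval_mul, eval_C, eval_finset_sum]
  simp only [eval_mul, eval_C, eval_pow, eval_X]
  rw [hsum, hevalQ, hzn, ← hQ0, ← mul_assoc, inv_mul_cancel₀ h0, one_mul]
end

section
/- Let M be a Galois number field over ℚ and let c, c' ∈ Gal(M/ℚ) be any two complex conjugations (i.e. restrictions to M of complex conjugation under two embeddings of M into ℂ). Then the fixed field of the subgroup of Gal(M/ℚ) generated by all products c·c' of pairs of complex conjugations is either totally real or a CM field. -/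
/-- `σ ∈ Gal(M/ℚ)` is a complex conjugation if it is induced by the complex conjugation
under some embedding `M → ℂ`. -/
def IsComplexConjugation (M : Type*) [Field M] [Algebra ℚ M] (σ : M ≃ₐ[ℚ] M) : Prop :=
  ∃ ι : M →+* ℂ, ∀ x : M, (starRingEnd ℂ) (ι x) = ι (σ x)

section aux

set_option linter.unusedSectionVars false

variable {M : Type*} [Field M] [NumberField M] [IsGalois ℚ M]

lemma exists_conj (ι : M →+* ℂ) : ∃ σ : M ≃ₐ[ℚ] M, ∀ x : M, (starRingEnd ℂ) (ι x) = ι (σ x) := by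
  letI : Algebra M ℂ := ι.toAlgebra
  haveI : IsScalarTower ℚ M ℂ := IsScalarTower.of_algebraMap_eq' (Subsingleton.elim _ _)
  exact ⟨(starRingEnd ℂ).toRatAlgHom.restrictNormal' M,
    fun x => (AlgHom.restrictNormal_commutes (starRingEnd ℂ).toRatAlgHom M x).symm⟩

lemma conj_invol {σ : M ≃ₐ[ℚ] M} (h : IsComplexConjugation M σ) : σ * σ = 1 := by
  obtain ⟨ι, hι⟩ := h
  ext x
  apply ι.injective
  have h1 := hι (σ x)
  have h2 := hι x
  simp only [AlgEquiv.mul_apply, AlgEquiv.one_apply]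
  rw [← h1, ← h2, Complex.conj_conj]

lemma conj_of_conj {σ : M ≃ₐ[ℚ] M} (τ : M ≃ₐ[ℚ] M) (h : IsComplexConjugation M σ) :
    IsComplexConjugation M (τ⁻¹ * σ * τ) := by
  obtain ⟨ι, hι⟩ := h
  refine ⟨ι.comp (τ : M →+* M), fun x => ?_⟩
  simp only [RingHom.coe_comp, Function.comp_apply, AlgEquiv.coe_ringHom_commutes]
  have h1 : ((τ⁻¹ * σ * τ) x : M) = τ⁻¹ (σ (τ x)) := rfl
  rw [h1]
  have h2 : (τ : M →+* M) (τ⁻¹ (σ (τ x))) = σ (τ x) := by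
    rw [show (τ⁻¹ : M ≃ₐ[ℚ] M) = τ.symm from rfl]
    exact τ.apply_symm_apply (σ (τ x))
  rw [h2]
  exact hι (τ x)

end aux

/-- Let `M` be a Galois number field over `ℚ` and let `c, c'` range over
the complex conjugations in `Gal(M/ℚ)`.  Then the fixed field of the subgroup generated by
all products `c * c'` of pairs of complex conjugations is either totally real or CM. -/
theorem fixedField_of_products_of_conjugations_totallyReal_or_CM
    (M : Type*) [Field M] [NumberField M] [IsGalois ℚ M] :
    IsTotallyRealField
        (IntermediateField.fixedField
          (Subgroup.closure
            {g : M ≃ₐ[ℚ] M | ∃ c c' : M ≃ₐ[ℚ] M,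
              IsComplexConjugation M c ∧ IsComplexConjugation M c' ∧ g = c * c'})) ∨
      IsCMField
        (IntermediateField.fixedField
          (Subgroup.closure
            {g : M ≃ₐ[ℚ] M | ∃ c c' : M ≃ₐ[ℚ] M,
              IsComplexConjugation M c ∧ IsComplexConjugation M c' ∧ g = c * c'})) := by
  set S : Set (M ≃ₐ[ℚ] M) :=
    {g : M ≃ₐ[ℚ] M | ∃ c c' : M ≃ₐ[ℚ] M,
      IsComplexConjugation M c ∧ IsComplexConjugation M c' ∧ g = c * c'} with hS
  set H : Subgroup (M ≃ₐ[ℚ] M) := Subgroup.closure S with hH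
  set K : IntermediateField ℚ M := IntermediateField.fixedField H with hK
  by_cases htr : IsTotallyRealField K
  · exact Or.inl htr
  right
  have hmemK : ∀ x : M, x ∈ K ↔ ∀ g : M ≃ₐ[ℚ] M, g ∈ H → g x = x := by
    intro x
    constructor
    · intro hx g hg; exact hx ⟨g, hg⟩
    · intro hx g; exact hx g g.2
  obtain ⟨c₀, hc₀⟩ := exists_conj (IsAlgClosed.lift : M →ₐ[ℚ] ℂ).toRingHom
  have hcc₀ : IsComplexConjugation M c₀ := ⟨_, hc₀⟩
  have hc₀invol : ∀ x : M, c₀ (c₀ x) = x := by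
    intro x
    have := congrArg (fun σ : M ≃ₐ[ℚ] M => σ x) (conj_invol hcc₀)
    simpa using this
  have hconjH : ∀ τ : M ≃ₐ[ℚ] M, ∀ h ∈ H, τ⁻¹ * h * τ ∈ H := by
    intro τ h hh
    induction hh using Subgroup.closure_induction with
    | mem g hg =>
        obtain ⟨c, c', hc, hc', rfl⟩ := hg
        apply Subgroup.subset_closure
        refine ⟨τ⁻¹ * c * τ, τ⁻¹ * c' * τ, conj_of_conj τ hc, conj_of_conj τ hc', ?_⟩
        group
    | one => simpa using H.one_mem
    | mul a b _ _ ha hb =>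
        have : τ⁻¹ * (a * b) * τ = (τ⁻¹ * a * τ) * (τ⁻¹ * b * τ) := by group
        rw [this]; exact H.mul_mem ha hb
    | inv a _ ha =>
        have : τ⁻¹ * a⁻¹ * τ = (τ⁻¹ * a * τ)⁻¹ := by group
        rw [this]; exact H.inv_mem ha
  have hc₀K : ∀ x : M, x ∈ K → c₀ x ∈ K := by
    intro x hx
    rw [hmemK] at hx ⊢
    intro g hg
    have h1 : (c₀⁻¹ * g * c₀) x = x := hx _ (hconjH c₀ g hg)
    have h2 : c₀ ((c₀⁻¹ * g * c₀) x) = c₀ x := congrArg c₀ h1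
    have h3 : c₀ ((c₀⁻¹ * g * c₀) x) = g (c₀ x) := by
      have : ((c₀⁻¹ * g * c₀) x : M) = c₀⁻¹ (g (c₀ x)) := rfl
      rw [this, show (c₀⁻¹ : M ≃ₐ[ℚ] M) = c₀.symm from rfl]
      exact c₀.apply_symm_apply (g (c₀ x))
    rw [← h3, h2]
  let cb : K ≃+* K :=
  { toFun := fun x => ⟨c₀ x.1, hc₀K x.1 x.2⟩
    invFun := fun x => ⟨c₀ x.1, hc₀K x.1 x.2⟩
    left_inv := fun x => Subtype.ext (hc₀invol x.1)
    right_inv := fun x => Subtype.ext (hc₀invol x.1)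
    map_mul' := fun x y => Subtype.ext (map_mul c₀ x.1 y.1)
    map_add' := fun x y => Subtype.ext (map_add c₀ x.1 y.1) }
  have key : ∀ j : K →+* ℂ, ∀ x : K, (starRingEnd ℂ) (j x) = j (cb x) := by
    intro j x
    haveI : FiniteDimensional K M := FiniteDimensional.right ℚ K M
    letI : Algebra K ℂ := j.toAlgebra
    haveI : FaithfulSMul K ℂ := (faithfulSMul_iff_algebraMap_injective K ℂ).mpr j.injective
    let ιa : M →ₐ[K] ℂ := IsAlgClosed.lift
    let ι : M →+* ℂ := ιa.toRingHom
    have hval : ∀ y : K, ι y.1 = j y := fun y => ιa.commutes y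
    obtain ⟨c, hc⟩ := exists_conj ι
    have hmemS : c₀ * c ∈ H := Subgroup.subset_closure ⟨c₀, c, hcc₀, ⟨ι, hc⟩, rfl⟩
    have hfix : c₀ (c x.1) = x.1 := (hmemK x.1).mp x.2 _ hmemS
    have h2 : c x.1 = c₀ x.1 := by
      have := congrArg c₀ hfix
      rwa [hc₀invol] at this
    calc (starRingEnd ℂ) (j x) = (starRingEnd ℂ) (ι x.1) := by rw [hval]
      _ = ι (c x.1) := hc x.1
      _ = ι (c₀ x.1) := by rw [h2]
      _ = j (cb x) := hval (cb x)
  refine ⟨?_, cb, fun j x => key j x⟩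
  intro j
  by_contra hre
  push_neg at hre
  have hcbid : ∀ x : K, cb x = x := by
    intro x
    apply j.injective
    rw [← key j x]
    exact Complex.conj_eq_iff_im.mpr (hre x)
  exact htr (fun j' x => Complex.conj_eq_iff_im.mp (by rw [key j' x, hcbid x]))
end

section
/- Let V be a finite-dimensional complex vector space, N : V → V a nilpotent endomorphism whose kernel is one-dimensional (equivalently, N has a single Jordan block). Let (Fil^i)_{i ∈ ℤ} be a decreasing, exhaustive, separated filtration of V by subspaces such that for all i, N(Fil^i) = (range N) ∩ Fil^{i-1}. Then dim_ℂ (Fil^i / Fil^{i+1}) ≤ 1 for every i. -/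
open Module Submodule LinearMap


/-- Let `V` be a finite-dimensional complex vector space, `N : V → V` a
nilpotent endomorphism whose kernel is one-dimensional (a single Jordan block), and
`(Fil i)_{i ∈ ℤ}` a decreasing, exhaustive, separated filtration of `V` such that
`N (Fil i) = (range N) ⊓ Fil (i-1)` for all `i`.  Then every graded piece
`Fil i / Fil (i+1)` has dimension at most `1`. -/
theorem graded_pieces_dim_le_one
    (V : Type*) [AddCommGroup V] [Module ℂ V] [FiniteDimensional ℂ V]
    (N : V →ₗ[ℂ] V) (hN : IsNilpotent N)
    (hker : Module.finrank ℂ (LinearMap.ker N) = 1)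
    (Fil : ℤ → Submodule ℂ V)
    (hdec : ∀ i : ℤ, Fil (i + 1) ≤ Fil i)
    (hexh : ∃ a : ℤ, Fil a = ⊤)
    (hsep : ∃ b : ℤ, Fil b = ⊥)
    (htrans : ∀ i : ℤ, Submodule.map N (Fil i) = LinearMap.range N ⊓ Fil (i - 1)) :
    ∀ i : ℤ,
      Module.finrank ℂ
        (↥(Fil i) ⧸ Submodule.comap (Fil i).subtype (Fil (i + 1))) ≤ 1 := by
  obtain ⟨a, ha⟩ := hexh
  set f : ℤ → ℕ := fun i => finrank ℂ (Fil i) with hf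
  set g : ℤ → ℕ := fun i => finrank ℂ ↥(LinearMap.ker N ⊓ Fil i) with hg
  set r : ℤ → ℕ := fun i => finrank ℂ ↥(LinearMap.range N ⊓ Fil i) with hr
  -- monotonicity
  have hmono : ∀ i j : ℤ, i ≤ j → Fil j ≤ Fil i := by
    have key : ∀ (i : ℤ) (k : ℕ), Fil (i + k) ≤ Fil i := by
      intro i k
      induction k with
      | zero => simp
      | succ n ih =>
        refine le_trans ?_ ih
        have := hdec (i + n)
        push_cast
        push_cast at this
        convert this using 2
        ring
    intro i j hij
    have : j = i + ((j - i).toNat : ℤ) := by omega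
    rw [this]; exact key i _
  -- comap finrank
  have hcomap : ∀ (p q : Submodule ℂ V), finrank ℂ (comap p.subtype q) = finrank ℂ ↥(q ⊓ p) := by
    intro p q
    have h1 : comap p.subtype q = comap p.subtype (q ⊓ p) := by
      rw [comap_inf, comap_subtype_self, inf_top_eq]
    rw [h1]
    exact LinearEquiv.finrank_eq (comapSubtypeEquivOfLe inf_le_right)
  -- key1 : rank-nullity for N restricted to Fil i
  have key1 : ∀ i : ℤ, r (i - 1) + g i = f i := by
    intro i
    have h := LinearMap.finrank_range_add_finrank_ker (N.domRestrict (Fil i))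
    rw [LinearMap.range_domRestrict, htrans i, LinearMap.ker_domRestrict] at h
    rw [hcomap] at h
    simpa [hf, hg, hr] using h
  -- key3
  have key3 : ∀ i : ℤ, r (i - 1) + f i ≤ r i + f (i - 1) := by
    intro i
    have hle : Fil i ≤ Fil (i - 1) := by
      have := hdec (i - 1); simpa using this
    have h := Submodule.finrank_sup_add_finrank_inf_eq (LinearMap.range N ⊓ Fil (i - 1)) (Fil i)
    have hinf : (LinearMap.range N ⊓ Fil (i - 1)) ⊓ Fil i = LinearMap.range N ⊓ Fil i := by
      rw [inf_assoc, inf_eq_right.mpr hle]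
    have e1 : finrank ℂ ↥(LinearMap.range N ⊓ Fil (i - 1)) = r (i - 1) := rfl
    have e2 : finrank ℂ ↥(LinearMap.range N ⊓ Fil i) = r i := rfl
    have e3 : finrank ℂ ↥(Fil i) = f i := rfl
    rw [hinf] at h
    have hsup : finrank ℂ ↥((LinearMap.range N ⊓ Fil (i - 1)) ⊔ Fil i) ≤ f (i - 1) :=
      Submodule.finrank_mono (sup_le (le_trans inf_le_right le_rfl) hle)
    omega
  -- g ≤ 1
  have hg1 : ∀ i : ℤ, g i ≤ 1 := by
    intro i
    calc g i ≤ finrank ℂ (LinearMap.ker N) := Submodule.finrank_mono inf_le_left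
    _ = 1 := hker
  -- main claim
  have C : ∀ i : ℤ, f i + g (i + 1) ≤ f (i + 1) + 1 := by
    have base : ∀ i : ℤ, i ≤ a - 1 → f i + g (i + 1) ≤ f (i + 1) + 1 := by
      intro i hi
      have h1 : Fil i = ⊤ := top_unique (ha ▸ hmono i a (by omega))
      have h2 : Fil (i + 1) = ⊤ := top_unique (ha ▸ hmono (i + 1) a (by omega))
      have : f i = f (i + 1) := by simp only [hf]; rw [h1, h2]
      have := hg1 (i + 1)
      omega
    have step : ∀ i : ℤ, a - 1 ≤ i → f i + g (i + 1) ≤ f (i + 1) + 1 := by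
      intro i hi
      refine Int.le_induction (motive := fun i _ => f i + g (i + 1) ≤ f (i + 1) + 1)
        (base (a - 1) le_rfl) ?_ i hi
      intro j hj ih
      have h1 := key1 (j + 1)
      have h2 := key1 (j + 1 + 1)
      rw [show j + 1 - 1 = j by ring] at h1
      rw [show j + 1 + 1 - 1 = j + 1 by ring] at h2
      have h3 := key3 (j + 1)
      rw [show j + 1 - 1 = j by ring] at h3
      omega
    intro i
    rcases le_or_gt i (a - 1) with h | h
    · exact base i h
    · exact step i (by omega)
  -- conclude
  intro i
  have hq := Submodule.finrank_quotient_add_finrank (comap (Fil i).subtype (Fil (i + 1)))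
  have hc : finrank ℂ (comap (Fil i).subtype (Fil (i + 1))) = f (i + 1) := by
    rw [hcomap]
    have : Fil (i + 1) ⊓ Fil i = Fil (i + 1) := inf_eq_left.mpr (hdec i)
    rw [this]
  have hCi := C i
  have : finrank ℂ ↥(Fil i) = f i := rfl
  omega
end

section
/- Let V be a finite-dimensional complex vector space with a nilpotent endomorphism N having a single Jordan block, and a decreasing exhaustive separated filtration (Fil^i) satisfying N(Fil^i) = (range N) ∩ Fil^{i-1} for all i. Let i₀ be maximal such that ker N ⊆ Fil^{i₀}. Then Fil^{i₀} = V, Fil^{i₀+1} ∩ ker N = 0, Fil^{i₀} = Fil^{i₀+1} ⊕ ker N, and for all i ≥ i₀ the map N^{i-i₀} induces an injection of Fil^i/Fil^{i+1} into Fil^{i₀}/Fil^{i₀+1}. -/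
/-- Let `V` be a finite-dimensional complex vector space with a
nilpotent endomorphism `N` having a single Jordan block (`dim ker N = 1`), and a
decreasing, exhaustive, separated filtration `(Fil i)` with
`N (Fil i) = (range N) ⊓ Fil (i-1)` for all `i`.  Let `i₀` be maximal with
`ker N ⊆ Fil i₀`.  Then `Fil i₀ = V`, `Fil (i₀+1) ∩ ker N = 0`,
`Fil i₀ = Fil (i₀+1) ⊕ ker N`, and for all `i ≥ i₀` the map `N^(i-i₀)` induces an
injection `Fil i / Fil (i+1) ↪ Fil i₀ / Fil (i₀+1)`. -/
theorem single_jordan_block_filtration_structure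
    (V : Type*) [AddCommGroup V] [Module ℂ V] [FiniteDimensional ℂ V]
    (N : V →ₗ[ℂ] V) (hN : IsNilpotent N)
    (hker : Module.finrank ℂ (LinearMap.ker N) = 1)
    (Fil : ℤ → Submodule ℂ V)
    (hdec : ∀ i : ℤ, Fil (i + 1) ≤ Fil i)
    (hexh : ∃ a : ℤ, Fil a = ⊤)
    (hsep : ∃ b : ℤ, Fil b = ⊥)
    (htrans : ∀ i : ℤ, Submodule.map N (Fil i) = LinearMap.range N ⊓ Fil (i - 1))
    (i₀ : ℤ) (hi₀ : LinearMap.ker N ≤ Fil i₀) (hi₀max : ¬ LinearMap.ker N ≤ Fil (i₀ + 1)) :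
    Fil i₀ = ⊤ ∧
      Fil (i₀ + 1) ⊓ LinearMap.ker N = ⊥ ∧
      Fil (i₀ + 1) ⊔ LinearMap.ker N = Fil i₀ ∧
      ∀ i : ℤ, i₀ ≤ i → ∀ x ∈ Fil i,
        (N ^ (i - i₀).toNat) x ∈ Fil (i₀ + 1) → x ∈ Fil (i + 1) := by
  have hanti : Antitone Fil := antitone_int_of_succ_le hdec
  -- Key step: if Fil j = ⊤ and ker N ≤ Fil (j+1), then Fil (j+1) = ⊤.
  have key : ∀ j : ℤ, Fil j = ⊤ → LinearMap.ker N ≤ Fil (j + 1) → Fil (j + 1) = ⊤ := by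
    intro j hj hk
    have hmap : Submodule.map N (Fil (j + 1)) = LinearMap.range N := by
      rw [htrans (j + 1)]
      simp [hj]
    rw [eq_top_iff]
    intro v _
    have : N v ∈ Submodule.map N (Fil (j + 1)) := by
      rw [hmap]; exact ⟨v, rfl⟩
    obtain ⟨w, hw, hwv⟩ := this
    have hvw : v - w ∈ LinearMap.ker N := by
      simp [LinearMap.mem_ker, map_sub, hwv]
    have hveq : v = w + (v - w) := by abel
    rw [hveq]
    exact (Fil (j + 1)).add_mem hw (hk hvw)
  -- Part 1 : Fil i₀ = ⊤
  obtain ⟨a, ha⟩ := hexh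
  have part1 : Fil i₀ = ⊤ := by
    rcases le_or_gt i₀ a with h | h
    · exact eq_top_iff.mpr (ha ▸ hanti h)
    · -- a < i₀ : climb from a to i₀
      have : ∀ k : ℕ, a + k ≤ i₀ → Fil (a + k) = ⊤ := by
        intro k
        induction k with
        | zero => intro _; simpa using ha
        | succ n ih =>
          intro hle
          have hle' : a + n ≤ i₀ := by
            push_cast at hle ⊢; omega
          have h1 : Fil (a + n) = ⊤ := ih hle'
          have h2 : LinearMap.ker N ≤ Fil (a + n + 1) := by
            refine le_trans hi₀ (hanti ?_)
            push_cast at hle ⊢; omega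
          have := key (a + n) h1 h2
          convert this using 2
          push_cast; ring
      have hk : a + ((i₀ - a).toNat : ℤ) = i₀ := by
        rw [Int.toNat_of_nonneg (by omega)]; ring
      have := this (i₀ - a).toNat (by rw [hk])
      rwa [hk] at this
  -- Part 2 : Fil (i₀+1) ⊓ ker N = ⊥
  have part2 : Fil (i₀ + 1) ⊓ LinearMap.ker N = ⊥ := by
    by_contra hne
    apply hi₀max
    set S := Fil (i₀ + 1) ⊓ LinearMap.ker N with hS
    have hle : S ≤ LinearMap.ker N := inf_le_right
    have hcom : (S.comap (LinearMap.ker N).subtype) ≠ ⊥ := by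
      intro hbot
      apply hne
      rw [eq_bot_iff]
      intro x hx
      have hxk : x ∈ LinearMap.ker N := hle hx
      have : (⟨x, hxk⟩ : LinearMap.ker N) ∈ S.comap (LinearMap.ker N).subtype := hx
      rw [hbot] at this
      simpa using this
    have hfin : Module.finrank ℂ (S.comap (LinearMap.ker N).subtype) =
        Module.finrank ℂ (LinearMap.ker N) := by
      have h1 : Module.finrank ℂ (S.comap (LinearMap.ker N).subtype) ≤
          Module.finrank ℂ (LinearMap.ker N) := Submodule.finrank_le _
      have h2 : 0 < Module.finrank ℂ (S.comap (LinearMap.ker N).subtype) := by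
        rw [Module.finrank_pos_iff]
        exact Submodule.nontrivial_iff_ne_bot.mpr hcom
      omega
    have htop : S.comap (LinearMap.ker N).subtype = ⊤ :=
      Submodule.eq_top_of_finrank_eq hfin
    have : LinearMap.ker N ≤ S := by
      intro x hx
      have : (⟨x, hx⟩ : LinearMap.ker N) ∈ S.comap (LinearMap.ker N).subtype := by
        rw [htop]; trivial
      exact this
    exact le_trans this inf_le_left
  -- Part 3 : Fil (i₀+1) ⊔ ker N = Fil i₀
  have part3 : Fil (i₀ + 1) ⊔ LinearMap.ker N = Fil i₀ := by
    rw [part1, eq_top_iff]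
    intro v _
    have hmap : Submodule.map N (Fil (i₀ + 1)) = LinearMap.range N := by
      rw [htrans (i₀ + 1)]
      simp [part1]
    have : N v ∈ Submodule.map N (Fil (i₀ + 1)) := by
      rw [hmap]; exact ⟨v, rfl⟩
    obtain ⟨w, hw, hwv⟩ := this
    have hvw : v - w ∈ LinearMap.ker N := by
      simp [LinearMap.mem_ker, map_sub, hwv]
    have hv : v = w + (v - w) := by abel
    rw [hv]
    exact Submodule.add_mem _ (Submodule.mem_sup_left hw) (Submodule.mem_sup_right hvw)
  -- Part 4
  refine ⟨part1, part2, part3, ?_⟩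
  have main : ∀ k : ℕ, ∀ x ∈ Fil (i₀ + k), (N ^ k) x ∈ Fil (i₀ + 1) →
      x ∈ Fil (i₀ + k + 1) := by
    intro k
    induction k with
    | zero =>
      intro x _ hx
      rw [pow_zero, Module.End.one_apply] at hx
      have h0 : i₀ + ((0:ℕ):ℤ) + 1 = i₀ + 1 := by push_cast; ring
      rw [h0]
      exact hx
    | succ n ih =>
      intro x hx hNx
      -- N x ∈ map N (Fil (i₀+n+1)) = range N ⊓ Fil (i₀+n)
      have hx' : x ∈ Fil (i₀ + n + 1) := by
        convert hx using 2; push_cast; ring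
      have hNx1 : N x ∈ Fil (i₀ + n) := by
        have : N x ∈ Submodule.map N (Fil (i₀ + n + 1)) := ⟨x, hx', rfl⟩
        rw [htrans (i₀ + n + 1)] at this
        simpa using this.2
      have hNxpow : (N ^ n) (N x) ∈ Fil (i₀ + 1) := by
        have : (N ^ (n + 1)) x = (N ^ n) (N x) := by
          rw [pow_succ]; rfl
        rw [← this]
        exact hNx
      have hNx2 : N x ∈ Fil (i₀ + n + 1) := ih (N x) hNx1 hNxpow
      -- so N x ∈ range N ⊓ Fil (i₀+n+1) = map N (Fil (i₀+n+2))
      have : N x ∈ Submodule.map N (Fil (i₀ + n + 2)) := by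
        rw [htrans (i₀ + n + 2)]
        have h21 : i₀ + n + 2 - 1 = i₀ + n + 1 := by ring
        rw [h21]
        exact ⟨⟨x, rfl⟩, hNx2⟩
      obtain ⟨y, hy, hyx⟩ := this
      have hxy : x - y ∈ LinearMap.ker N := by
        simp [LinearMap.mem_ker, map_sub, hyx]
      have hxyF : x - y ∈ Fil (i₀ + 1) := by
        apply Submodule.sub_mem
        · exact hanti (by omega) hx'
        · exact hanti (by omega) hy
      have : x - y ∈ Fil (i₀ + 1) ⊓ LinearMap.ker N := ⟨hxyF, hxy⟩
      rw [part2] at this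
      have hx_eq : x = y := sub_eq_zero.mp ((Submodule.mem_bot ℂ).mp this)
      have hcast : i₀ + (((n:ℕ) + 1 : ℕ) : ℤ) + 1 = i₀ + (n : ℤ) + 2 := by
        push_cast; ring
      rw [hx_eq, hcast]
      exact hy
  intro i hi x hx hNx
  have hk : i₀ + ((i - i₀).toNat : ℤ) = i := by
    rw [Int.toNat_of_nonneg (by omega)]; ring
  have := main (i - i₀).toNat x (by rwa [hk]) hNx
  rwa [hk] at this
end
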